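/- Let A ∈ ℝ^{n×n} be a Metzler matrix. Then A is Hurwitz if and only if there exists a diagonal matrix P with positive diagonal entries (P ≻ 0) such that AᵀP + PA is negative definite. -/

import Mathlib

open Matrix Complex Filter

/-- A real square matrix is *Metzler* if all its off-diagonal entries are nonnegative. -/
def Matrix.Metzler {n : ℕ} (A : Matrix (Fin n) (Fin n) ℝ) : Prop :=
  ∀ i j, i ≠ j → 0 ≤ A i j

/-- A real square matrix is *Hurwitz* if every (complex) eigenvalue has negative real part. -/
def Matrix.Hurwitz {n : ℕ} (A : Matrix (Fin n) (Fin n) ℝ) : Prop :=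
  ∀ μ ∈ spectrum ℂ (A.map (Complex.ofReal)), μ.re < 0

/-- A real square matrix is *Schur stable* if every (complex) eigenvalue lies strictly
inside the unit circle. -/
def Matrix.SchurStable {n : ℕ} (A : Matrix (Fin n) (Fin n) ℝ) : Prop :=
  ∀ μ ∈ spectrum ℂ (A.map (Complex.ofReal)), ‖μ‖ < 1

attribute [local instance] Matrix.linftyOpNormedRing Matrix.linftyOpNormedAlgebra

variable {n : ℕ}

private lemma entry_nnnorm_le (X : Matrix (Fin n) (Fin n) ℝ) (i j : Fin n) :
    ‖X i j‖₊ ≤ ‖X‖₊ := by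
  rw [Matrix.linfty_opNNNorm_def]
  exact le_trans (Finset.single_le_sum (f := fun k => ‖X i k‖₊)
    (fun k _ => zero_le) (Finset.mem_univ j)) (Finset.le_sup (f := fun i => ∑ j, ‖X i j‖₊) (Finset.mem_univ i))

private noncomputable def entryCLM (i j : Fin n) : Matrix (Fin n) (Fin n) ℝ →L[ℝ] ℝ :=
  LinearMap.mkContinuous
    { toFun := fun X => X i j
      map_add' := fun _ _ => rfl
      map_smul' := fun _ _ => rfl } 1
    (fun X => by show ‖X i j‖ ≤ 1 * ‖X‖; rw [one_mul]; exact_mod_cast entry_nnnorm_le X i j)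

private lemma mul_entries_nonneg {X Y : Matrix (Fin n) (Fin n) ℝ}
    (hX : ∀ i j, 0 ≤ X i j) (hY : ∀ i j, 0 ≤ Y i j) : ∀ i j, 0 ≤ (X * Y) i j := by
  intro i j
  rw [Matrix.mul_apply]
  exact Finset.sum_nonneg fun k _ => mul_nonneg (hX i k) (hY k j)

private lemma pow_entries_nonneg {X : Matrix (Fin n) (Fin n) ℝ}
    (hX : ∀ i j, 0 ≤ X i j) (m : ℕ) : ∀ i j, 0 ≤ (X ^ m) i j := by
  induction m with
  | zero => intro i j; by_cases h : i = j <;> simp [pow_zero, Matrix.one_apply, h]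
  | succ k ih => rw [pow_succ]; exact mul_entries_nonneg ih hX

private lemma exists_pow_nnnorm_lt_one {M : Matrix (Fin n) (Fin n) ℂ}
    (h : spectralRadius ℂ M < 1) : ∃ m : ℕ, ‖M ^ m‖₊ < 1 := by
  have hG := spectrum.pow_nnnorm_pow_one_div_tendsto_nhds_spectralRadius M
  have hev : ∀ᶠ m : ℕ in atTop, (‖M ^ m‖₊ : ENNReal) ^ (1 / (m : ℝ)) < 1 :=
    hG.eventually_lt_const h
  obtain ⟨m, hm, hm1⟩ := (hev.and (eventually_ge_atTop 1)).exists
  refine ⟨m, ?_⟩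
  have hm0 : (0:ℝ) < (m:ℝ) := by exact_mod_cast hm1
  have hx : ((‖M ^ m‖₊ : ENNReal) ^ (1 / (m : ℝ))) ^ (m:ℝ) < 1 := by
    calc ((‖M ^ m‖₊ : ENNReal) ^ (1 / (m : ℝ))) ^ (m:ℝ) < (1:ENNReal) ^ (m:ℝ) :=
          ENNReal.rpow_lt_rpow hm hm0
    _ = 1 := ENNReal.one_rpow _
  rw [← ENNReal.rpow_mul, one_div, inv_mul_cancel₀ (ne_of_gt hm0), ENNReal.rpow_one] at hx
  exact_mod_cast hx

private lemma nnnorm_map_ofReal (X : Matrix (Fin n) (Fin n) ℝ) :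
    ‖X.map (Complex.ofReal)‖₊ = ‖X‖₊ := by
  simp [Matrix.linfty_opNNNorm_def, Matrix.map_apply]

private lemma map_ofReal_pow (X : Matrix (Fin n) (Fin n) ℝ) (m : ℕ) :
    (X ^ m).map (Complex.ofReal) = (X.map (Complex.ofReal)) ^ m := by
  have : X.map (Complex.ofReal) = (Complex.ofRealHom.mapMatrix : Matrix (Fin n) (Fin n) ℝ →+* _) X := rfl
  rw [this, ← map_pow]
  rfl

private lemma exists_nonneg_inv {C : Matrix (Fin n) (Fin n) ℝ} (hC : ∀ i j, 0 ≤ C i j)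
    (hspec : spectralRadius ℂ (C.map Complex.ofReal) < 1) :
    ∃ G : Matrix (Fin n) (Fin n) ℝ, (∀ i j, 0 ≤ G i j) ∧ (1 - C) * G = 1 := by
  obtain ⟨m, hm⟩ := exists_pow_nnnorm_lt_one hspec
  rw [← map_ofReal_pow, nnnorm_map_ofReal] at hm
  set K := C ^ m with hK
  have hKn : ‖K‖ < 1 := by exact_mod_cast hm
  have hsum : Summable (fun k : ℕ => K ^ k) := summable_geometric_of_norm_lt_one hKn
  set M := ∑' k : ℕ, K ^ k with hMdef
  have hMK : (1 - K) * M = 1 := mul_neg_geom_series K hKn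
  have hMnn : ∀ i j, 0 ≤ M i j := by
    intro i j
    have hMij : M i j = ∑' k : ℕ, (K ^ k) i j := (entryCLM i j).map_tsum hsum
    rw [hMij]
    exact tsum_nonneg fun k => pow_entries_nonneg (pow_entries_nonneg hC m) k i j
  refine ⟨(∑ j ∈ Finset.range m, C ^ j) * M, ?_, ?_⟩
  · refine mul_entries_nonneg ?_ hMnn
    intro i j
    rw [Matrix.sum_apply]
    exact Finset.sum_nonneg fun k _ => pow_entries_nonneg hC k i j
  · rw [← mul_assoc, mul_neg_geom_sum, hMK]

private lemma map_ofReal_add (X Y : Matrix (Fin n) (Fin n) ℝ) :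
    (X + Y).map (Complex.ofReal) = X.map Complex.ofReal + Y.map Complex.ofReal := by
  ext i j; simp [Matrix.map_apply]

private lemma map_ofReal_smul (c : ℝ) (X : Matrix (Fin n) (Fin n) ℝ) :
    (c • X).map (Complex.ofReal) = (c : ℂ) • X.map Complex.ofReal := by
  ext i j; simp [Matrix.map_apply]

private lemma map_ofReal_one :
    ((1 : Matrix (Fin n) (Fin n) ℝ)).map (Complex.ofReal) = 1 := by
  ext i j; by_cases h : i = j <;> simp [Matrix.map_apply, Matrix.one_apply, h]

set_option maxHeartbeats 1000000 in
private lemma exists_pos_mulVec_neg {A : Matrix (Fin n) (Fin n) ℝ}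
    (hA : A.Metzler) (hH : A.Hurwitz) (hn : 0 < n) :
    ∃ x : Fin n → ℝ, (∀ i, 0 < x i) ∧ ∀ i, (A *ᵥ x) i < 0 := by
  have hne : Nonempty (Fin n) := ⟨⟨0, hn⟩⟩
  set A' := A.map (Complex.ofReal) with hA'
  obtain ⟨μ₀, hμ₀, hmax⟩ := (spectrum.isCompact A').exists_isMaxOn (spectrum.nonempty A')
    Complex.continuous_re.continuousOn
  have hδ : 0 < -μ₀.re := by have := hH μ₀ hμ₀; linarith
  set δ : ℝ := -μ₀.re with hδdef
  -- choose s
  set s : ℝ := 1 + ‖A'‖ ^ 2 / (2 * δ) + Finset.univ.sup' (Finset.univ_nonempty) (fun i => |A i i|)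
    with hsdef
  have hsup_nonneg : 0 ≤ Finset.univ.sup' (Finset.univ_nonempty) (fun i : Fin n => |A i i|) :=
    le_trans (abs_nonneg (A ⟨0, hn⟩ ⟨0, hn⟩))
      (Finset.le_sup' (f := fun i => |A i i|) (Finset.mem_univ (⟨0, hn⟩ : Fin n)))
  have hs1 : 1 ≤ s := by
    have : 0 ≤ ‖A'‖ ^ 2 / (2 * δ) := by positivity
    simp only [hsdef]; linarith
  have hs0 : 0 < s := by linarith
  have hsA : ‖A'‖ ^ 2 / (2 * δ) < s := by
    simp only [hsdef]; linarith
  have hdiag : ∀ i, 0 ≤ s + A i i := by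
    intro i
    have h1 : |A i i| ≤ Finset.univ.sup' (Finset.univ_nonempty) (fun i => |A i i|) :=
      Finset.le_sup' (f := fun i => |A i i|) (Finset.mem_univ i)
    have h2 : -A i i ≤ |A i i| := neg_le_abs _
    have : 0 ≤ ‖A'‖ ^ 2 / (2 * δ) := by positivity
    simp only [hsdef]; linarith
  -- spectrum bound
  have hspecbound : ∀ μ ∈ spectrum ℂ A', ‖μ + s‖ < s := by
    intro μ hμ
    have hre : μ.re ≤ -δ := by
      have := hmax hμ
      simp only [Set.mem_setOf_eq] at this
      simp only [hδdef]; linarith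
    have hnorm : ‖μ‖ ≤ ‖A'‖ := spectrum.norm_le_norm_of_mem hμ
    have habs : ‖μ + s‖ ^ 2 = μ.re ^ 2 + μ.im ^ 2 + 2 * s * μ.re + s ^ 2 := by
      rw [Complex.sq_norm]
      simp only [Complex.normSq_apply, Complex.add_re, Complex.add_im, Complex.ofReal_re,
        Complex.ofReal_im]
      ring
    have hnsq : ‖μ‖ ^ 2 = μ.re ^ 2 + μ.im ^ 2 := by
      rw [Complex.sq_norm]
      simp [Complex.normSq_apply]; ring
    have hlt : ‖μ + s‖ ^ 2 < s ^ 2 := by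
      have h2 : 2 * s * μ.re ≤ 2 * s * (-δ) := by
        apply mul_le_mul_of_nonneg_left hre; positivity
      have h3 : ‖A'‖ ^ 2 < 2 * s * δ := by
        rw [div_lt_iff₀ (by positivity)] at hsA
        nlinarith
      have h4 : ‖μ‖ ^ 2 ≤ ‖A'‖ ^ 2 := by nlinarith [norm_nonneg μ]
      nlinarith [hnsq]
    nlinarith [norm_nonneg (μ + (s:ℂ)), sq_nonneg (‖μ + (s:ℂ)‖ - s)]
  -- the shifted matrix
  set B : Matrix (Fin n) (Fin n) ℝ := A + s • 1 with hBdef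
  have hBnn : ∀ i j, 0 ≤ B i j := by
    intro i j
    by_cases h : i = j
    · subst h; simpa [hBdef, Matrix.add_apply, Matrix.smul_apply, Matrix.one_apply,
        add_comm] using hdiag i
    · simpa [hBdef, Matrix.add_apply, Matrix.smul_apply, Matrix.one_apply, h] using hA i j h
  have hB' : B.map Complex.ofReal = A' + algebraMap ℂ (Matrix (Fin n) (Fin n) ℂ) (s : ℂ) := by
    rw [hBdef, map_ofReal_add, map_ofReal_smul, map_ofReal_one, Algebra.algebraMap_eq_smul_one]
  have hspecB : ∀ ν ∈ spectrum ℂ (B.map Complex.ofReal), ‖ν‖ < s := by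
    intro ν hν
    rw [hB', ← spectrum.add_singleton_eq] at hν
    obtain ⟨μ, hμ, w, hw, rfl⟩ := Set.mem_add.mp hν
    rw [Set.mem_singleton_iff] at hw
    subst hw
    exact hspecbound μ hμ
  -- rescale
  set C : Matrix (Fin n) (Fin n) ℝ := s⁻¹ • B with hCdef
  have hCnn : ∀ i j, 0 ≤ C i j := fun i j => by
    simpa [hCdef, Matrix.smul_apply] using mul_nonneg (inv_nonneg.mpr hs0.le) (hBnn i j)
  have hC' : C.map Complex.ofReal = ((s : ℂ)⁻¹) • B.map Complex.ofReal := by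
    rw [hCdef, map_ofReal_smul, Complex.ofReal_inv]
  have hspecC : spectralRadius ℂ (C.map Complex.ofReal) < 1 := by
    have hsC : (s : ℂ) ≠ 0 := by exact_mod_cast hs0.ne'
    have hforall : ∀ z ∈ spectrum ℂ (C.map Complex.ofReal), ‖z‖₊ < (1 : NNReal) := ?_
    · simpa using spectrum.spectralRadius_lt_of_forall_lt (C.map Complex.ofReal) hforall
    intro z hz
    have hsm : ((s:ℂ)⁻¹ • B.map Complex.ofReal)
        = (Units.mk0 ((s:ℂ)⁻¹) (inv_ne_zero hsC)) • B.map Complex.ofReal := by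
      rw [Units.smul_def, Units.val_mk0]
    rw [hC', hsm, spectrum.unit_smul_eq_smul] at hz
    obtain ⟨ν, hν, rfl⟩ := hz
    have := hspecB ν hν
    have hzn : ‖(Units.mk0 ((s:ℂ)⁻¹) (inv_ne_zero hsC)) • ν‖ < 1 := by
      rw [Units.smul_def, Units.val_mk0, norm_smul, norm_inv, Complex.norm_real,
        Real.norm_of_nonneg hs0.le]
      rw [inv_mul_lt_iff₀ hs0, mul_one]
      exact this
    exact_mod_cast hzn
  obtain ⟨G, hGnn, hG⟩ := exists_nonneg_inv hCnn hspecC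
  set x : Fin n → ℝ := G *ᵥ (fun _ => s⁻¹) with hxdef
  have hxnn : ∀ i, 0 ≤ x i := by
    intro i
    rw [hxdef, Matrix.mulVec]
    exact Finset.sum_nonneg fun j _ => mul_nonneg (hGnn i j) (inv_nonneg.mpr hs0.le)
  have hAx : ∀ i, (A *ᵥ x) i = -1 := by
    have hAeq : A = s • (C - 1) := by
      rw [hCdef, smul_sub, smul_smul, mul_inv_cancel₀ hs0.ne', one_smul, hBdef]
      abel
    have h1 : (C - 1) *ᵥ x = ((C - 1) * G) *ᵥ (fun _ => s⁻¹) := by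
      rw [hxdef, Matrix.mulVec_mulVec]
    have h2 : (C - 1) * G = -1 := by
      have : (1 - C) * G = 1 := hG
      have h3 : C - 1 = -(1 - C) := (neg_sub _ _).symm
      rw [h3, neg_mul, this]
    intro i
    rw [hAeq, Matrix.smul_mulVec, Pi.smul_apply, h1, h2]
    simp only [Matrix.mulVec, dotProduct, Matrix.neg_apply, Matrix.one_apply]
    rw [Finset.sum_eq_single i]
    · simp [mul_inv_cancel₀ hs0.ne']
    · intro b _ hb; simp [Ne.symm hb]
    · intro hi; exact absurd (Finset.mem_univ i) hi
  refine ⟨x, fun i => ?_, fun i => by rw [hAx i]; norm_num⟩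
  rcases lt_or_eq_of_le (hxnn i) with h | h
  · exact h
  · exfalso
    have h0 : (A *ᵥ x) i = ∑ j, A i j * x j := rfl
    have hge : 0 ≤ (A *ᵥ x) i := by
      rw [h0]
      refine Finset.sum_nonneg fun j _ => ?_
      by_cases hij : i = j
      · subst hij; rw [← h]; simp
      · exact mul_nonneg (hA i j hij) (hxnn j)
    rw [hAx i] at hge; linarith

private lemma spectrum_transpose (M : Matrix (Fin n) (Fin n) ℂ) :
    spectrum ℂ Mᵀ = spectrum ℂ M := by
  ext μ
  rw [spectrum.mem_iff, spectrum.mem_iff, Matrix.isUnit_iff_isUnit_det,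
    Matrix.isUnit_iff_isUnit_det]
  have : algebraMap ℂ (Matrix (Fin n) (Fin n) ℂ) μ - Mᵀ
      = (algebraMap ℂ (Matrix (Fin n) (Fin n) ℂ) μ - M)ᵀ := by
    rw [Matrix.transpose_sub, Matrix.algebraMap_eq_diagonal, Matrix.diagonal_transpose]
  rw [this, Matrix.det_transpose]

private lemma hurwitz_transpose {A : Matrix (Fin n) (Fin n) ℝ} (h : A.Hurwitz) :
    (Aᵀ).Hurwitz := by
  intro μ hμ
  apply h μ
  rwa [Matrix.transpose_map, spectrum_transpose] at hμ

private lemma exists_eigenvector {M : Matrix (Fin n) (Fin n) ℂ} {μ : ℂ}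
    (h : μ ∈ spectrum ℂ M) : ∃ v : Fin n → ℂ, v ≠ 0 ∧ M *ᵥ v = μ • v := by
  rw [spectrum.mem_iff] at h
  rw [Matrix.isUnit_iff_isUnit_det, isUnit_iff_ne_zero, not_not] at h
  obtain ⟨v, hv0, hv⟩ := (Matrix.exists_mulVec_eq_zero_iff).mpr h
  refine ⟨v, hv0, ?_⟩
  rw [Matrix.sub_mulVec, sub_eq_zero] at hv
  rw [← hv]
  ext i
  simp [Matrix.algebraMap_eq_diagonal, Matrix.mulVec_diagonal, Algebra.algebraMap_eq_smul_one,
    Matrix.smul_mulVec, Matrix.one_mulVec]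

private lemma negdef_of_symm {Q : Matrix (Fin n) (Fin n) ℝ} (hsym : Qᵀ = Q)
    (hoff : ∀ i j, i ≠ j → 0 ≤ Q i j) {x : Fin n → ℝ} (hx : ∀ i, 0 < x i)
    (hQx : ∀ i, (Q *ᵥ x) i < 0) : (-Q).PosDef := by
  have hQsymm : ∀ i j, Q j i = Q i j := by
    intro i j
    conv_lhs => rw [← hsym]
    rfl
  refine Matrix.PosDef.of_dotProduct_mulVec_pos ?_ ?_
  · ext i j
    simp only [Matrix.conjTranspose_apply, Matrix.neg_apply, star_trivial, neg_inj]
    exact hQsymm i j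
  · intro v hv
    have hstar : star v = v := by
      funext i; simp
    rw [hstar]
    have key : v ⬝ᵥ (Q *ᵥ v) < 0 := by
      set u : Fin n → ℝ := fun j => v j / x j with hu
      have hvu : ∀ j, v j = x j * u j := by
        intro j
        rw [hu, mul_comm]
        exact (div_mul_cancel₀ (v j) (hx j).ne').symm
      set T : Matrix (Fin n) (Fin n) ℝ := fun i j => Q i j * x i * x j with hT
      have hTsymm : ∀ i j, T j i = T i j := by
        intro i j; simp only [hT]; rw [hQsymm i j]; ring
      have step1 : v ⬝ᵥ (Q *ᵥ v) = ∑ i, ∑ j, T i j * (u i * u j) := by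
        simp only [dotProduct, Matrix.mulVec, Finset.mul_sum, hT]
        refine Finset.sum_congr rfl fun i _ => Finset.sum_congr rfl fun j _ => ?_
        rw [hvu i, hvu j]; ring
      have step2 : ∑ i, ∑ j, T i j * (u i * u j)
          ≤ ∑ i, ∑ j, T i j * ((u i ^ 2 + u j ^ 2) / 2) := by
        refine Finset.sum_le_sum fun i _ => Finset.sum_le_sum fun j _ => ?_
        by_cases hij : i = j
        · subst hij; apply le_of_eq; ring
        · have hT0 : 0 ≤ T i j := by
            simp only [hT]
            exact mul_nonneg (mul_nonneg (hoff i j hij) (hx i).le) (hx j).le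
          have : u i * u j ≤ (u i ^ 2 + u j ^ 2) / 2 := by nlinarith [sq_nonneg (u i - u j)]
          exact mul_le_mul_of_nonneg_left this hT0
      have step3 : ∑ i, ∑ j, T i j * ((u i ^ 2 + u j ^ 2) / 2)
          = ∑ i, u i ^ 2 * (x i * (Q *ᵥ x) i) := by
        have hsplit : ∀ i j, T i j * ((u i ^ 2 + u j ^ 2) / 2)
            = T i j * u i ^ 2 / 2 + T i j * u j ^ 2 / 2 := by intro i j; ring
        simp only [hsplit, Finset.sum_add_distrib]
        have hswap : ∑ i, ∑ j, T i j * u j ^ 2 / 2 = ∑ i, ∑ j, T i j * u i ^ 2 / 2 := by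
          rw [Finset.sum_comm]
          refine Finset.sum_congr rfl fun i _ => Finset.sum_congr rfl fun j _ => ?_
          rw [hTsymm i j]
        rw [hswap, ← Finset.sum_add_distrib]
        refine Finset.sum_congr rfl fun i _ => ?_
        have : ∑ j, T i j * u i ^ 2 / 2 + ∑ j, T i j * u i ^ 2 / 2
            = ∑ j, T i j * u i ^ 2 := by
          rw [← Finset.sum_add_distrib]
          refine Finset.sum_congr rfl fun j _ => by ring
        rw [this]
        simp only [hT, Matrix.mulVec, dotProduct, Finset.mul_sum]
        refine Finset.sum_congr rfl fun j _ => by ring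
      have step4 : ∑ i, u i ^ 2 * (x i * (Q *ᵥ x) i) < 0 := by
        have hne : ∃ i, v i ≠ 0 := by
          by_contra hc
          push_neg at hc
          exact hv (funext fun i => hc i)
        obtain ⟨i₀, hi₀⟩ := hne
        have hu₀ : u i₀ ≠ 0 := by
          rw [hu]
          exact div_ne_zero hi₀ (hx i₀).ne'
        have : (0:ℝ) = ∑ _i : Fin n, (0:ℝ) := by simp
        rw [this]
        refine Finset.sum_lt_sum (fun i _ => ?_) ⟨i₀, Finset.mem_univ i₀, ?_⟩
        · exact mul_nonpos_of_nonneg_of_nonpos (sq_nonneg _)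
            (mul_nonpos_of_nonneg_of_nonpos (hx i).le (hQx i).le)
        · apply mul_neg_of_pos_of_neg
          · exact pow_two_pos_of_ne_zero hu₀
          · exact mul_neg_of_pos_of_neg (hx i₀) (hQx i₀)
      calc v ⬝ᵥ (Q *ᵥ v) = ∑ i, ∑ j, T i j * (u i * u j) := step1
        _ ≤ ∑ i, ∑ j, T i j * ((u i ^ 2 + u j ^ 2) / 2) := step2
        _ = ∑ i, u i ^ 2 * (x i * (Q *ᵥ x) i) := step3
        _ < 0 := step4
    rw [Matrix.neg_mulVec, dotProduct_neg]
    linarith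

private lemma map_ofReal_mul (X Y : Matrix (Fin n) (Fin n) ℝ) :
    (X * Y).map (Complex.ofReal) = X.map Complex.ofReal * Y.map Complex.ofReal := by
  ext i j
  simp [Matrix.map_apply, Matrix.mul_apply]

private lemma mulVec_star_real (X : Matrix (Fin n) (Fin n) ℝ) (w : Fin n → ℂ) :
    (X.map Complex.ofReal) *ᵥ (star w) = star ((X.map Complex.ofReal) *ᵥ w) := by
  ext i
  simp only [Matrix.mulVec, dotProduct, Pi.star_apply, Matrix.map_apply, star_sum,
    star_mul', RCLike.star_def, Complex.conj_ofReal]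

private lemma re_quad (Q : Matrix (Fin n) (Fin n) ℝ) (v : Fin n → ℂ) :
    (star v ⬝ᵥ ((Q.map Complex.ofReal) *ᵥ v)).re
      = (fun i => (v i).re) ⬝ᵥ (Q *ᵥ fun i => (v i).re)
        + (fun i => (v i).im) ⬝ᵥ (Q *ᵥ fun i => (v i).im) := by
  simp only [dotProduct, Matrix.mulVec, Pi.star_apply, Matrix.map_apply]
  rw [Complex.re_sum, ← Finset.sum_add_distrib]
  refine Finset.sum_congr rfl fun i _ => ?_
  rw [Finset.mul_sum, Complex.re_sum, Finset.mul_sum, Finset.mul_sum, ← Finset.sum_add_distrib]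
  refine Finset.sum_congr rfl fun j _ => ?_
  simp only [RCLike.star_def, Complex.mul_re, Complex.mul_im, Complex.conj_re, Complex.conj_im,
    Complex.ofReal_re, Complex.ofReal_im]
  ring

private lemma hurwitz_of_lyap {A : Matrix (Fin n) (Fin n) ℝ} {d : Fin n → ℝ}
    (hd : ∀ i, 0 < d i)
    (hP : (-(Aᵀ * Matrix.diagonal d + Matrix.diagonal d * A)).PosDef) : A.Hurwitz := by
  intro μ hμ
  obtain ⟨v, hv0, hv⟩ := exists_eigenvector hμ
  set Q : Matrix (Fin n) (Fin n) ℝ := Aᵀ * Matrix.diagonal d + Matrix.diagonal d * A with hQ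
  set A' : Matrix (Fin n) (Fin n) ℂ := A.map Complex.ofReal with hA'
  set D' : Matrix (Fin n) (Fin n) ℂ := (Matrix.diagonal d).map Complex.ofReal with hD'
  have hD'' : D' = Matrix.diagonal (fun i => (d i : ℂ)) := by
    rw [hD', Matrix.diagonal_map (by simp)]
  have hne : ∃ i, v i ≠ 0 := by
    by_contra hc
    push_neg at hc
    exact hv0 (funext fun i => hc i)
  set r : ℝ := ∑ i, d i * Complex.normSq (v i) with hr
  have hrpos : 0 < r := by
    obtain ⟨i₀, hi₀⟩ := hne
    refine Finset.sum_pos' (fun i _ => mul_nonneg (hd i).le (Complex.normSq_nonneg _))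
      ⟨i₀, Finset.mem_univ i₀, mul_pos (hd i₀) ?_⟩
    exact Complex.normSq_pos.mpr hi₀
  have hDv : star v ⬝ᵥ (D' *ᵥ v) = (r : ℂ) := by
    rw [hD'']
    simp only [dotProduct, Matrix.mulVec_diagonal, Pi.star_apply, hr,
      Complex.ofReal_sum]
    refine Finset.sum_congr rfl fun i _ => ?_
    rw [Complex.ofReal_mul, Complex.normSq_eq_conj_mul_self]
    simp only [RCLike.star_def]
    ring
  have hQv : star v ⬝ᵥ ((Q.map Complex.ofReal) *ᵥ v) = ((starRingEnd ℂ) μ + μ) * (r : ℂ) := by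
    have hQ' : Q.map Complex.ofReal = A'ᵀ * D' + D' * A' := by
      rw [hQ, map_ofReal_add, map_ofReal_mul, map_ofReal_mul, hA', hD', Matrix.transpose_map]
    rw [hQ', Matrix.add_mulVec, dotProduct_add]
    have hterm2 : star v ⬝ᵥ ((D' * A') *ᵥ v) = μ * (r : ℂ) := by
      rw [← Matrix.mulVec_mulVec, hv, Matrix.mulVec_smul, dotProduct_smul, hDv]
      rfl
    have hterm1 : star v ⬝ᵥ ((A'ᵀ * D') *ᵥ v) = (starRingEnd ℂ) μ * (r : ℂ) := by
      rw [← Matrix.mulVec_mulVec, Matrix.dotProduct_mulVec, Matrix.vecMul_transpose, hA',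
        mulVec_star_real, ← hA', hv, star_smul, smul_dotProduct, hDv]
      rfl
    rw [hterm1, hterm2]
    ring
  have hle : ∀ w : Fin n → ℝ, w ⬝ᵥ (Q *ᵥ w) ≤ 0 := by
    intro w
    by_cases hw : w = 0
    · subst hw; simp
    · have h2 := hP.dotProduct_mulVec_pos hw
      have hstar : star w = w := funext fun i => by simp
      rw [hstar, Matrix.neg_mulVec, dotProduct_neg] at h2
      linarith
  have hlt : ∀ w : Fin n → ℝ, w ≠ 0 → w ⬝ᵥ (Q *ᵥ w) < 0 := by
    intro w hw
    have h2 := hP.dotProduct_mulVec_pos hw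
    have hstar : star w = w := funext fun i => by simp
    rw [hstar, Matrix.neg_mulVec, dotProduct_neg] at h2
    linarith
  have hab : (fun i => (v i).re) ≠ 0 ∨ (fun i => (v i).im) ≠ 0 := by
    by_contra hc
    push_neg at hc
    obtain ⟨ha, hb⟩ := hc
    refine hv0 (funext fun i => ?_)
    have h1 : (v i).re = 0 := congrFun ha i
    have h2 : (v i).im = 0 := congrFun hb i
    exact Complex.ext h1 h2
  have hre_neg : (star v ⬝ᵥ ((Q.map Complex.ofReal) *ᵥ v)).re < 0 := by
    rw [re_quad]
    rcases hab with ha | hb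
    · have := hlt _ ha
      have := hle (fun i => (v i).im)
      linarith
    · have := hlt _ hb
      have := hle (fun i => (v i).re)
      linarith
  rw [hQv] at hre_neg
  have hconj : (starRingEnd ℂ) μ + μ = ((2 * μ.re : ℝ) : ℂ) := by
    rw [add_comm]
    exact Complex.add_conj μ
  rw [hconj, ← Complex.ofReal_mul, Complex.ofReal_re] at hre_neg
  nlinarith

/-- A Metzler matrix `A` is Hurwitz iff there is a diagonal matrix `P` with positive
diagonal entries such that `AᵀP + PA` is negative definite. -/
theorem metzler_hurwitz_iff_exists_diag_lyapunov {n : ℕ} (A : Matrix (Fin n) (Fin n) ℝ)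
    (hA : A.Metzler) :
    A.Hurwitz ↔ ∃ d : Fin n → ℝ, (∀ i, 0 < d i) ∧
      (-(Aᵀ * Matrix.diagonal d + Matrix.diagonal d * A)).PosDef := by
  rcases Nat.eq_zero_or_pos n with hn0 | hn
  · subst hn0
    constructor
    · intro _
      refine ⟨fun _ => 1, fun i => one_pos, ?_, ?_⟩
      · ext i j; exact i.elim0
      · intro x hx
        exact absurd (by ext i; exact i.elim0 : x = 0) hx
    · intro _ μ hμ
      haveI : Subsingleton (Matrix (Fin 0) (Fin 0) ℂ) :=
        ⟨fun a b => by ext i j; exact i.elim0⟩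
      rw [spectrum.of_subsingleton] at hμ
      exact absurd hμ (Set.notMem_empty μ)
  · constructor
    · intro hH
      obtain ⟨x, hx, hAx⟩ := exists_pos_mulVec_neg hA hH hn
      have hAT : (Aᵀ).Metzler := fun i j hij => hA j i (Ne.symm hij)
      obtain ⟨z, hz, hAz⟩ := exists_pos_mulVec_neg hAT (hurwitz_transpose hH) hn
      set d : Fin n → ℝ := fun i => z i / x i with hd
      have hdpos : ∀ i, 0 < d i := fun i => div_pos (hz i) (hx i)
      refine ⟨d, hdpos, ?_⟩
      refine negdef_of_symm ?_ ?_ hx ?_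
      · rw [Matrix.transpose_add, Matrix.transpose_mul, Matrix.transpose_mul,
          Matrix.diagonal_transpose, Matrix.transpose_transpose]
        exact add_comm _ _
      · intro i j hij
        rw [Matrix.add_apply, Matrix.mul_diagonal, Matrix.diagonal_mul]
        have h1 : 0 ≤ Aᵀ i j := hA j i (Ne.symm hij)
        have h2 : 0 ≤ A i j := hA i j hij
        have := (hdpos i).le
        have := (hdpos j).le
        positivity
      · intro i
        rw [Matrix.add_mulVec, ← Matrix.mulVec_mulVec, ← Matrix.mulVec_mulVec]
        have hdx : (Matrix.diagonal d) *ᵥ x = z := by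
          funext k
          rw [Matrix.mulVec_diagonal, hd]
          exact div_mul_cancel₀ (z k) (hx k).ne'
        rw [hdx]
        have h1 : (Aᵀ *ᵥ z) i < 0 := hAz i
        have h2 : ((Matrix.diagonal d) *ᵥ (A *ᵥ x)) i < 0 := by
          rw [Matrix.mulVec_diagonal]
          exact mul_neg_of_pos_of_neg (hdpos i) (hAx i)
        have : ((Aᵀ *ᵥ z) + (Matrix.diagonal d *ᵥ (A *ᵥ x))) i
            = (Aᵀ *ᵥ z) i + (Matrix.diagonal d *ᵥ (A *ᵥ x)) i := rfl
        rw [this]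
        linarith
    · rintro ⟨d, hd, hP⟩
      exact hurwitz_of_lyap hd hP
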